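/- Let S be an integrable real-valued random variable on a probability space, let α ∈ (0,1), let δ ≥ 0, and let q be a real number with P(S ≤ q) = α. Then the infimum over all real z of the quantity (δ + E[(S − z)^+])/(1 − α) + z equals δ/(1 − α) + E[S · 1_{S > q}]/(1 − α), and this infimum is attained at z = q. -/

import Mathlib

open MeasureTheory

/-- final optimization step of the DRO CVaR dual. If `P(S ≤ q) = α`,
then `inf_z [(δ + E[(S−z)⁺])/(1−α) + z] = δ/(1−α) + E[S·1_{S>q}]/(1−α)`, and the
infimum is attained at `z = q`. -/
theorem stmt_7 {Ω : Type*} [MeasurableSpace Ω] (P : Measure Ω)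
    [IsProbabilityMeasure P] (S : Ω → ℝ) (hS : Integrable S P)
    (α : ℝ) (hα : α ∈ Set.Ioo (0 : ℝ) 1) (δ : ℝ) (hδ : 0 ≤ δ)
    (q : ℝ) (hq : P {ω | S ω ≤ q} = ENNReal.ofReal α) :
    IsLeast {v : ℝ | ∃ z : ℝ, v = (δ + ∫ ω, max (S ω - z) 0 ∂P) / (1 - α) + z}
      (δ / (1 - α) + (∫ ω in {ω | q < S ω}, S ω ∂P) / (1 - α)) ∧
    (δ + ∫ ω, max (S ω - q) 0 ∂P) / (1 - α) + q
      = δ / (1 - α) + (∫ ω in {ω | q < S ω}, S ω ∂P) / (1 - α) := by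
  obtain ⟨hα0, hα1⟩ := hα
  have h1α : (0:ℝ) < 1 - α := by linarith
  set g := hS.1.mk S with hgdef
  have hgm : Measurable g := hS.1.measurable_mk
  have hge : S =ᵐ[P] g := hS.1.ae_eq_mk
  have hgint : Integrable g P := hS.congr hge
  set T : Set Ω := {ω | q < g ω} with hT
  have hTm : MeasurableSet T := measurableSet_lt measurable_const hgm
  -- measure facts
  have hsets : {ω | S ω ≤ q} =ᵐ[P] {ω | g ω ≤ q} := by
    filter_upwards [hge] with ω h
    show (S ω ≤ q) = (g ω ≤ q)
    rw [h]
  have hPTc : P {ω | g ω ≤ q} = ENNReal.ofReal α := by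
    rw [← measure_congr hsets]; exact hq
  have hPT : P T = ENNReal.ofReal (1 - α) := by
    have hTe : T = {ω | g ω ≤ q}ᶜ := by ext ω; simp [hT, not_le]
    rw [hTe, measure_compl (measurableSet_le hgm measurable_const) (measure_ne_top _ _),
      hPTc, measure_univ, ← ENNReal.ofReal_one, ← ENNReal.ofReal_sub _ hα0.le]
  have hPTr : (P T).toReal = 1 - α := by rw [hPT, ENNReal.toReal_ofReal h1α.le]
  -- integrability of max
  have hMint : ∀ z : ℝ, Integrable (fun ω => max (g ω - z) 0) P := by
    intro z
    have h1 : Integrable (fun ω => g ω - z) P := hgint.sub (integrable_const z)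
    exact h1.pos_part
  -- rewriting integrals with g
  have hMS : ∀ z : ℝ, (∫ ω, max (S ω - z) 0 ∂P) = ∫ ω, max (g ω - z) 0 ∂P := by
    intro z
    refine integral_congr_ae ?_
    filter_upwards [hge] with ω h
    rw [h]
  have hsetT : {ω | q < S ω} =ᵐ[P] T := by
    filter_upwards [hge] with ω h
    show (q < S ω) = (q < g ω)
    rw [h]

  have hIS : (∫ ω in {ω | q < S ω}, S ω ∂P) = ∫ ω in T, g ω ∂P := by
    rw [setIntegral_congr_set hsetT]
    exact integral_congr_ae (ae_restrict_of_ae hge)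
  have hgT : IntegrableOn g T P := hgint.integrableOn
  -- key value at q
  have hIq : (∫ ω, max (g ω - q) 0 ∂P) = (∫ ω in T, g ω ∂P) - q * (1 - α) := by
    have heq : (fun ω => max (g ω - q) 0) = T.indicator (fun ω => g ω - q) := by
      ext ω
      by_cases h : q < g ω
      · simp [Set.indicator, hT, h, max_eq_left (by linarith : (0:ℝ) ≤ g ω - q)]
      · push_neg at h
        simp [Set.indicator, hT, not_lt.2 h, max_eq_right (by linarith : g ω - q ≤ 0)]
    rw [heq, integral_indicator hTm, integral_sub hgT (integrableOn_const (measure_ne_top _ _)),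
      setIntegral_const, smul_eq_mul, measureReal_def, hPTr, mul_comm]
  -- lower bound
  have hlb : ∀ z : ℝ, (∫ ω, max (g ω - q) 0 ∂P) + (q - z) * (1 - α) ≤ ∫ ω, max (g ω - z) 0 ∂P := by
    intro z
    have hind : Integrable (fun ω => (q - z) * T.indicator (fun _ => (1:ℝ)) ω) P :=
      ((integrable_const (1:ℝ)).indicator hTm).const_mul _
    have hpt : ∀ ω, max (g ω - q) 0 + (q - z) * T.indicator (fun _ => (1:ℝ)) ω
        ≤ max (g ω - z) 0 := by
      intro ω
      by_cases h : q < g ω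
      · have h1 : max (g ω - q) 0 = g ω - q := max_eq_left (by linarith)
        have h2 : g ω - z ≤ max (g ω - z) 0 := le_max_left _ _
        simp only [Set.indicator, hT, Set.mem_setOf_eq, h, if_true, mul_one]
        linarith
      · push_neg at h
        have h1 : max (g ω - q) 0 = 0 := max_eq_right (by linarith)
        have h2 : (0:ℝ) ≤ max (g ω - z) 0 := le_max_right _ _
        simp only [Set.indicator, hT, Set.mem_setOf_eq, not_lt.2 h, if_false, mul_zero]
        linarith
    have hmono := integral_mono ((hMint q).add hind) (hMint z) hpt
    simp only [Pi.add_apply] at hmono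
    have hIone : ∫ ω, T.indicator (fun _ => (1:ℝ)) ω ∂P = 1 - α := by
      rw [integral_indicator hTm, setIntegral_const, smul_eq_mul, mul_one, measureReal_def, hPTr]
    rwa [integral_add (hMint q) hind, integral_const_mul, hIone] at hmono
  set I := ∫ ω in T, g ω ∂P with hI
  have key : (δ + ∫ ω, max (S ω - q) 0 ∂P) / (1 - α) + q
      = δ / (1 - α) + (∫ ω in {ω | q < S ω}, S ω ∂P) / (1 - α) := by
    rw [hMS q, hIS, hIq]
    field_simp
    ring
  refine ⟨⟨⟨q, key.symm⟩, ?_⟩, key⟩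
  rintro v ⟨z, rfl⟩
  rw [hMS z, hIS]
  have hz := hlb z
  rw [hIq] at hz
  rw [← add_div, div_add' _ _ _ h1α.ne', div_le_div_iff₀ h1α h1α]
  nlinarith [hz, h1α]
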